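/- A nontrivial free group F has no nontrivial finitely generated normal subgroup of infinite index. Consequently, if χ : F_n → ℤ is a surjective homomorphism from a non-abelian free group, then ker χ is infinitely generated (not finitely generated). -/

import Mathlib

open List

set_option linter.unusedSectionVars false

namespace StmtAux

variable {α : Type} [DecidableEq α]

open FreeGroup

/-- reduced word predicate -/
def IsRed (L : List (α × Bool)) : Prop :=
  List.Chain' (fun p q => ¬(p.1 = q.1 ∧ p.2 = !q.2)) L

theorem isRed_append {L₁ L₂ : List (α × Bool)} :
    IsRed (L₁ ++ L₂) ↔ IsRed L₁ ∧ IsRed L₂ ∧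
      ∀ x ∈ L₁.getLast?, ∀ y ∈ L₂.head?, ¬(x.1 = y.1 ∧ x.2 = !y.2) :=
  List.isChain_append

theorem isRed_of_reduce_eq {L : List (α × Bool)} (h : reduce L = L) : IsRed L := by
  induction L with
  | nil => exact List.isChain_nil
  | cons p L ih =>
    rw [reduce.cons] at h
    rcases hr : reduce L with _ | ⟨hd, tl⟩
    · rw [hr] at h
      change [p] = p :: L at h
      injection h with _ h
      subst h; exact List.isChain_singleton p
    · rw [hr] at h
      change (if p.1 = hd.1 ∧ p.2 = !hd.2 then tl else p :: hd :: tl) = p :: L at h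
      by_cases hc : p.1 = hd.1 ∧ p.2 = !hd.2
      · rw [if_pos hc] at h
        have h1 := congrArg List.length h
        have h2 : tl.length + 1 ≤ L.length := by
          have := FreeGroup.Red.length_le (FreeGroup.reduce.red (L := L))
          rw [hr] at this; simpa using this
        simp at h1; omega
      · rw [if_neg hc] at h
        have hL : L = hd :: tl := by injection h with _ h2; exact h2.symm
        have : reduce L = L := by rw [hr, hL]
        have ihL := ih this
        rw [hL]
        exact List.IsChain.cons_cons hc (hL ▸ ihL)

theorem reduce_eq_of_isRed {L : List (α × Bool)} (h : IsRed L) : reduce L = L := by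
  induction L with
  | nil => rfl
  | cons p L ih =>
    have hL : IsRed L := h.tail
    rw [reduce.cons, ih hL]
    cases L with
    | nil => rfl
    | cons hd tl =>
      have hc : ¬(p.1 = hd.1 ∧ p.2 = !hd.2) := (List.isChain_cons_cons.mp h).1
      change (if p.1 = hd.1 ∧ p.2 = !hd.2 then tl else p :: hd :: tl) = p :: hd :: tl
      rw [if_neg hc]

theorem isRed_toWord (x : FreeGroup α) : IsRed x.toWord :=
  isRed_of_reduce_eq (FreeGroup.reduce_toWord x)

theorem IsRed.append_left {L₁ L₂ : List (α × Bool)} (h : IsRed (L₁ ++ L₂)) : IsRed L₁ :=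
  (isRed_append.mp h).1

theorem IsRed.append_right {L₁ L₂ : List (α × Bool)} (h : IsRed (L₁ ++ L₂)) : IsRed L₂ :=
  (isRed_append.mp h).2.1

/-- gluing along a common nonempty middle -/
theorem IsRed.glue {A B C : List (α × Bool)} (h1 : IsRed (A ++ B)) (h2 : IsRed (B ++ C))
    (hB : B ≠ []) : IsRed (A ++ B ++ C) := by
  rw [List.append_assoc]
  rw [isRed_append] at h1 h2 ⊢
  refine ⟨h1.1, isRed_append.mpr ⟨h2.1, h2.2.1, h2.2.2⟩, ?_⟩
  intro x hx y hy
  refine h1.2.2 x hx y ?_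
  rw [List.head?_append_of_ne_nil _ hB] at hy
  exact hy

theorem invRev_append_singleton (L : List (α × Bool)) (p : α × Bool) :
    invRev (L ++ [p]) = (p.1, !p.2) :: invRev L := by
  simp [invRev]

/-- The core cancellation lemma for products of reduced words. -/
theorem core (L₁ L₂ : List (α × Bool)) (h₁ : IsRed L₁) (h₂ : IsRed L₂) :
    ∃ P Q C : List (α × Bool), L₁ = P ++ C ∧ L₂ = invRev C ++ Q ∧
      reduce (L₁ ++ L₂) = P ++ Q ∧ IsRed (P ++ Q) := by
  induction L₁ using List.reverseRecOn generalizing L₂ with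
  | nil =>
    exact ⟨[], L₂, [], rfl, rfl, by simpa using reduce_eq_of_isRed h₂, h₂⟩
  | append_singleton L₁' p ih =>
    by_cases h : IsRed (L₁' ++ [p] ++ L₂)
    · exact ⟨L₁' ++ [p], L₂, [], by simp, rfl, reduce_eq_of_isRed h, h⟩
    · -- junction cancellation
      rw [isRed_append] at h
      push_neg at h
      obtain ⟨x, hx, y, hy, hxy⟩ := h h₁ h₂
      have hx' : p = x := by
        rw [List.getLast?_append_of_ne_nil (l₁ := L₁') (by simp : [p] ≠ [])] at hx
        simpa using hx
      subst hx'
      cases L₂ with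
      | nil => simp at hy
      | cons q L₂' =>
        have hy' : q = y := by simpa using hy
        subst hy'
        have hq : q = (p.1, !p.2) := by
          obtain ⟨h1, h2⟩ := hxy
          cases q with
          | mk q1 q2 =>
            cases p with
            | mk p1 p2 =>
              simp only at h1 h2 ⊢
              refine Prod.ext h1.symm ?_
              simp only at h2 ⊢
              rw [h2]; simp
        have hred : reduce (L₁' ++ [p] ++ (q :: L₂')) = reduce (L₁' ++ L₂') := by
          apply FreeGroup.reduce.Step.eq
          rw [hq]
          have he : L₁' ++ [p] ++ ((p.1, !p.2) :: L₂') = L₁' ++ (p.1, p.2) :: (p.1, !p.2) :: L₂' := by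
            simp
          rw [he]
          exact FreeGroup.Red.Step.not
        obtain ⟨P, Q, C, e1, e2, e3, e4⟩ := ih L₂' h₁.append_left h₂.tail
        refine ⟨P, Q, C ++ [p], by rw [← List.append_assoc, ← e1], ?_, by rw [hred, e3], e4⟩
        rw [invRev_append_singleton]
        simp only [List.cons_append]
        rw [← hq, ← e2]





/-- product structure at group level -/
theorem core' (a b : FreeGroup α) :
    ∃ P Q C : List (α × Bool), a.toWord = P ++ C ∧ b.toWord = invRev C ++ Q ∧
      (a * b).toWord = P ++ Q ∧ IsRed (P ++ Q) := by
  obtain ⟨P, Q, C, e1, e2, e3, e4⟩ := core a.toWord b.toWord (isRed_toWord a) (isRed_toWord b)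
  refine ⟨P, Q, C, e1, e2, ?_, e4⟩
  have : a * b = mk (a.toWord ++ b.toWord) := by
    rw [← FreeGroup.mul_mk, FreeGroup.mk_toWord, FreeGroup.mk_toWord]
  rw [this, FreeGroup.toWord_mk, e3]

theorem mk_prefix_reduced {p L : List (α × Bool)} (h : p <+: L) (hL : IsRed L) :
    (FreeGroup.mk p).toWord = p := by
  obtain ⟨r, rfl⟩ := h
  rw [FreeGroup.toWord_mk, reduce_eq_of_isRed hL.append_left]

/-- prefix of a product -/
theorem prefix_mul {a b : FreeGroup α} {p : List (α × Bool)} (h : p <+: (a * b).toWord) :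
    p <+: a.toWord ∨ ∃ q, q <+: b.toWord ∧ FreeGroup.mk p = a * FreeGroup.mk q := by
  obtain ⟨P, Q, C, e1, e2, e3, e4⟩ := core' a b
  rw [e3] at h
  rcases le_or_gt p.length P.length with hl | hl
  · left
    have hpP : p <+: P := List.prefix_of_prefix_length_le h (List.prefix_append P Q) hl
    rw [e1]; exact hpP.trans (List.prefix_append P C)
  · right
    have hPp : P <+: p := List.prefix_of_prefix_length_le (List.prefix_append P Q) h hl.le
    obtain ⟨r, rfl⟩ := hPp
    have hrQ : r <+: Q := (List.prefix_append_right_inj P).mp h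
    refine ⟨invRev C ++ r, by rw [e2]; exact (List.prefix_append_right_inj (invRev C)).mpr hrQ, ?_⟩
    have hmk : a = FreeGroup.mk P * FreeGroup.mk C := by
      rw [FreeGroup.mul_mk, ← e1, FreeGroup.mk_toWord]
    rw [← FreeGroup.mul_mk (L₁ := P) (L₂ := r), hmk]
    rw [mul_assoc]
    congr 1
    rw [← FreeGroup.mul_mk, ← FreeGroup.inv_mk, ← mul_assoc, mul_inv_cancel, one_mul]

/-- prefix of an inverse -/
theorem prefix_inv {a : FreeGroup α} {p : List (α × Bool)} (h : p <+: (a⁻¹).toWord) :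
    ∃ r, r <+: a.toWord ∧ FreeGroup.mk p = a⁻¹ * FreeGroup.mk r := by
  rw [FreeGroup.toWord_inv] at h
  set L := a.toWord with hL
  -- invRev L = (L.map fun g => (g.1, !g.2)).reverse
  obtain ⟨s, hs⟩ := h
  -- p ++ s = invRev L, so L = invRev (p ++ s) = invRev s ++ invRev p...
  have hinv : L = invRev s ++ invRev p := by
    have := congrArg invRev hs
    rw [FreeGroup.invRev_invRev] at this
    rw [← this]
    simp [invRev]
  refine ⟨invRev s, by rw [hinv]; exact List.prefix_append _ _, ?_⟩
  have ha : a = FreeGroup.mk (invRev s) * FreeGroup.mk (invRev p) := by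
    rw [FreeGroup.mul_mk, ← hinv, FreeGroup.mk_toWord]
  have hp : FreeGroup.mk (invRev p) = (FreeGroup.mk p)⁻¹ := (FreeGroup.inv_mk).symm
  rw [ha, hp]
  group

/-- Every prefix of (the reduced word of) an element of `closure S` is `R`-close to the subgroup. -/
theorem prefix_close {S : Set (FreeGroup α)} {R : ℕ} (hS : ∀ x ∈ S, norm x ≤ R) :
    ∀ n ∈ Subgroup.closure S, ∀ p, p <+: n.toWord →
      ∃ m ∈ Subgroup.closure S, norm (m⁻¹ * FreeGroup.mk p) ≤ R := by
  intro n hn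
  induction hn using Subgroup.closure_induction with
  | mem x hx =>
    intro p hp
    refine ⟨1, one_mem _, ?_⟩
    rw [inv_one, one_mul]
    calc norm (FreeGroup.mk p) ≤ p.length := FreeGroup.norm_mk_le
    _ ≤ x.toWord.length := hp.length_le
    _ = norm x := rfl
    _ ≤ R := hS x hx
  | one =>
    intro p hp
    rw [FreeGroup.toWord_one] at hp
    rw [List.prefix_nil.mp hp]
    exact ⟨1, one_mem _, by simp [FreeGroup.one_eq_mk.symm]⟩
  | mul x y hx hy ihx ihy =>
    intro p hp
    rcases prefix_mul hp with h | ⟨q, hq, hpq⟩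
    · exact ihx p h
    · obtain ⟨m, hm, hmn⟩ := ihy q hq
      refine ⟨x * m, Subgroup.mul_mem _ hx hm, ?_⟩
      rw [hpq]
      have : (x * m)⁻¹ * (x * FreeGroup.mk q) = m⁻¹ * FreeGroup.mk q := by group
      rw [this]; exact hmn
  | inv x hx ihx =>
    intro p hp
    obtain ⟨r, hr, hpr⟩ := prefix_inv hp
    obtain ⟨m, hm, hmn⟩ := ihx r hr
    refine ⟨x⁻¹ * m, Subgroup.mul_mem _ (Subgroup.inv_mem _ hx) hm, ?_⟩
    rw [hpr]
    have : (x⁻¹ * m)⁻¹ * (x⁻¹ * FreeGroup.mk r) = m⁻¹ * FreeGroup.mk r := by group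
    rw [this]; exact hmn


theorem norm_eq_length (u : FreeGroup α) : norm u = u.toWord.length := rfl

/-- cyclic reduction -/
theorem cycred : ∀ m : ℕ, ∀ u : FreeGroup α, norm u = m → u ≠ 1 →
    ∃ c v : FreeGroup α, u = c * v * c⁻¹ ∧ v ≠ 1 ∧ IsRed (v.toWord ++ v.toWord) ∧
      norm c + norm v ≤ norm u := by
  intro m
  induction m using Nat.strong_induction_on with
  | _ m ih =>
    intro u hm hu
    by_cases hred : IsRed (u.toWord ++ u.toWord)
    · exact ⟨1, u, by group, hu, hred, by simp⟩
    · have hwne : u.toWord ≠ [] := fun h => hu (FreeGroup.toWord_eq_nil_iff.mp h)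
      have hwred : IsRed u.toWord := isRed_toWord u
      rw [isRed_append] at hred
      push_neg at hred
      obtain ⟨x, hx, y, hy, hxy⟩ := hred hwred hwred
      obtain ⟨hd, w', hwc⟩ := List.exists_cons_of_ne_nil hwne
      rw [hwc] at hx hy hwred
      have hy' : y = hd := by symm; simpa using hy
      rw [hy'] at hxy
      clear hy' hy
      rcases List.eq_nil_or_concat w' with rfl | ⟨M, lst, rfl⟩
      · -- u.toWord = [hd] : contradiction with hxy
        have hx' : hd = x := by simpa using hx
        rw [← hx'] at hxy
        simp at hxy
      · rw [List.concat_eq_append] at hwred hx hwc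
        have hx' : lst = x := by
          have hgl : (hd :: (M ++ [lst])).getLast? = some lst := by
            rw [List.getLast?_eq_getLast (by simp), List.getLast_cons (by simp)]
            simp
          rw [hgl] at hx
          simpa using hx
        rw [← hx'] at hxy
        clear hx' hx
        have hlst : lst = (hd.1, !hd.2) := by
          obtain ⟨h1, h2⟩ := hxy
          rw [Prod.ext_iff]
          exact ⟨h1, by rw [h2]⟩
        set ξ : FreeGroup α := FreeGroup.mk [hd] with hξ
        have hMred : IsRed M := by
          have h' : IsRed ([hd] ++ (M ++ [lst])) := by simpa using hwred
          exact (h'.append_right).append_left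
        have hMne : M ≠ [] := by
          rintro rfl
          have h' : IsRed [hd, lst] := by simpa using hwred
          rw [hlst] at h'
          have := (List.isChain_cons_cons.mp h').1
          simp at this
        have hmM : (FreeGroup.mk M).toWord = M := by
          rw [FreeGroup.toWord_mk, reduce_eq_of_isRed hMred]
        have hmne : FreeGroup.mk M ≠ 1 := by
          intro h
          rw [h] at hmM
          exact hMne (by simpa [FreeGroup.toWord_one] using hmM.symm)
        have hinv : FreeGroup.mk [lst] = ξ⁻¹ := by
          rw [hξ, FreeGroup.inv_mk]
          congr 1
          rw [hlst]
          simp [FreeGroup.invRev]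
        have hu' : u = ξ * FreeGroup.mk M * ξ⁻¹ := by
          conv_lhs => rw [← FreeGroup.mk_toWord (x := u), hwc]
          have he : (hd :: (M ++ [lst])) = [hd] ++ M ++ [lst] := by simp
          rw [he, ← FreeGroup.mul_mk, ← FreeGroup.mul_mk, hinv, hξ]
        have hnormM : norm (FreeGroup.mk M) = M.length := by
          rw [norm_eq_length, hmM]
        have hnormu : norm u = M.length + 2 := by
          rw [norm_eq_length, hwc]
          simp
        obtain ⟨c', v, hc1, hc2, hc3, hc4⟩ := ih (M.length) (by omega) (FreeGroup.mk M)
          hnormM hmne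
        refine ⟨ξ * c', v, ?_, hc2, hc3, ?_⟩
        · rw [hu', hc1]; group
        · have hnξ : norm ξ = 1 := by
            rw [norm_eq_length, hξ, FreeGroup.toWord_mk, reduce_singleton]
            rfl
          have h5 := FreeGroup.norm_mul_le ξ c'
          omega

/-- powers of a cyclically reduced word -/
theorem pow_flatten {v : FreeGroup α} (hv : IsRed (v.toWord ++ v.toWord)) (k : ℕ) :
    (v ^ k).toWord = (List.replicate k v.toWord).flatten := by
  by_cases h1 : v = 1
  · subst h1
    simp [FreeGroup.toWord_one]
  have hwne : v.toWord ≠ [] := fun h => h1 (FreeGroup.toWord_eq_nil_iff.mp h)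
  have key : ∀ j : ℕ, IsRed (v.toWord ++ (List.replicate j v.toWord).flatten) := by
    intro j
    induction j with
    | zero => simpa using hv.append_left
    | succ j ihj =>
      rw [List.replicate_succ, List.flatten_cons, ← List.append_assoc]
      exact hv.glue ihj hwne
  have hmk : ∀ j : ℕ, v ^ j = FreeGroup.mk ((List.replicate j v.toWord).flatten) := by
    intro j
    induction j with
    | zero => simp [FreeGroup.one_eq_mk]
    | succ j ihj =>
      rw [pow_succ', ihj, List.replicate_succ, List.flatten_cons]
      rw [← FreeGroup.mul_mk, FreeGroup.mk_toWord]
  rw [hmk k, FreeGroup.toWord_mk]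
  cases k with
  | zero => simp
  | succ k =>
    rw [List.replicate_succ, List.flatten_cons]
    exact reduce_eq_of_isRed (key k)


theorem suffix_eq_of_length {d e L : List (α × Bool)} (hd : d <:+ L) (he : e <:+ L)
    (h : d.length = e.length) : d = e := by
  obtain ⟨s, rfl⟩ := hd
  obtain ⟨t, ht⟩ := he
  have hst : s.length = t.length := by
    have := congrArg List.length ht
    simp at this ⊢
    omega
  exact (List.append_inj ht.symm hst).2

theorem length_flatten_replicate (n : ℕ) (w : List (α × Bool)) :
    ((List.replicate n w).flatten).length = n * w.length := by
  induction n with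
  | zero => simp
  | succ n ihn => rw [List.replicate_succ, List.flatten_cons]; simp [ihn]; ring

/-- every coset of a nontrivial normal subgroup generated by elements of norm ≤ R
has a representative of norm ≤ R + norm u -/
theorem coset_bound (N : Subgroup (FreeGroup α)) [hNn : N.Normal] (S : Set (FreeGroup α))
    (hN : Subgroup.closure S = N) {R : ℕ} (hS : ∀ x ∈ S, norm x ≤ R)
    (u : FreeGroup α) (huN : u ∈ N) (hu : u ≠ 1) (g : FreeGroup α) :
    ∃ n ∈ N, norm (n * g) ≤ R + norm u := by
  obtain ⟨c, v, hcv, hv1, hvred, hnorm⟩ := cycred (norm u) u rfl hu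
  obtain ⟨h, hh⟩ : ∃ h, h = g * c := ⟨_, rfl⟩
  have hwne : v.toWord ≠ [] := fun h' => hv1 (FreeGroup.toWord_eq_nil_iff.mp h')
  have hl1 : 1 ≤ v.toWord.length := List.length_pos_iff.mpr hwne
  obtain ⟨k, hk⟩ : ∃ k, k = norm h + 1 := ⟨_, rfl⟩
  obtain ⟨KL, hKL⟩ : ∃ x, x = k * v.toWord.length := ⟨_, rfl⟩
  have hkKL : k ≤ KL := by
    rw [hKL]
    calc k = k * 1 := (mul_one k).symm
    _ ≤ k * v.toWord.length := Nat.mul_le_mul_left k hl1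
  have hkl : norm h < KL := by omega
  -- step 1
  obtain ⟨P₁, Q₁, C₁, e1, e2, e3, e4⟩ := core' h (v ^ (2 * k))
  have hC₁ : C₁.length ≤ norm h := by
    have := congrArg List.length e1
    rw [norm_eq_length]
    simp at this
    omega
  have hQ₁ : C₁.length + Q₁.length = 2 * KL := by
    have h2 := congrArg List.length e2
    rw [pow_flatten hvred, length_flatten_replicate] at h2
    simp [FreeGroup.invRev_length] at h2
    have h3 : 2 * k * v.toWord.length = 2 * KL := by rw [hKL]; ring
    omega
  -- step 2
  obtain ⟨P₂, Q₂, C₂, f1, f2, f3, f4⟩ := core' (h * v ^ (2 * k)) h⁻¹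
  have hC₂ : C₂.length ≤ norm h := by
    have h2 := congrArg List.length f2
    have h3 : h⁻¹.toWord.length = norm h := by
      rw [← norm_eq_length]; exact FreeGroup.norm_inv_eq
    have h4 : norm h = h.toWord.length := norm_eq_length h
    simp at h2
    omega
  obtain ⟨j, hj⟩ : ∃ j, j = P₁.length + Q₁.length - KL := ⟨_, rfl⟩
  have hjQ : KL ≤ Q₁.length := by omega
  obtain ⟨p, hp⟩ : ∃ p : List (α × Bool), p = (P₁ ++ Q₁).take j := ⟨_, rfl⟩
  have hplen : p.length = j := by
    rw [hp, List.length_take]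
    simp
    omega
  have hP₂len : P₂.length + C₂.length = P₁.length + Q₁.length := by
    have := congrArg List.length (f1.symm.trans e3)
    simp at this
    omega
  -- p is a prefix of the reduced word of n₀ := h * v^(2k) * h⁻¹
  have hp₂ : p <+: P₂ := by
    apply List.prefix_of_prefix_length_le (hp ▸ List.take_prefix _ _)
    · rw [← e3, f1]
      exact List.prefix_append _ _
    · omega
  have hppre : p <+: (h * v ^ (2 * k) * h⁻¹).toWord := by
    rw [f3]
    exact hp₂.trans (List.prefix_append P₂ Q₂)
  -- identify mk p = h * v^k
  have hd : (P₁ ++ Q₁).drop j = (List.replicate k v.toWord).flatten := by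
    apply suffix_eq_of_length (L := P₁ ++ Q₁) (List.drop_suffix _ _)
    · have h2k : List.replicate (2 * k) v.toWord
          = List.replicate k v.toWord ++ List.replicate k v.toWord := by
        rw [← List.replicate_add]
        congr 1
        omega
      have h1 : (List.replicate k v.toWord).flatten <:+ (v ^ (2 * k)).toWord := by
        rw [pow_flatten hvred, h2k, List.flatten_append]
        exact List.suffix_append _ _
      have h2 : Q₁ <:+ (v ^ (2 * k)).toWord := by
        rw [e2]; exact List.suffix_append _ _
      have hlen : ((List.replicate k v.toWord).flatten).length ≤ Q₁.length := by
        rw [length_flatten_replicate, ← hKL]; omega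
      exact (List.suffix_of_suffix_length_le h1 h2 hlen).trans (List.suffix_append P₁ Q₁)
    · rw [List.length_drop, length_flatten_replicate, ← hKL]
      simp
      omega
  have hmkp : FreeGroup.mk p = h * v ^ k := by
    have hsplit : FreeGroup.mk (P₁ ++ Q₁) = FreeGroup.mk p * FreeGroup.mk ((P₁ ++ Q₁).drop j) := by
      rw [FreeGroup.mul_mk, hp, List.take_append_drop]
    have hPQ : FreeGroup.mk (P₁ ++ Q₁) = h * v ^ (2 * k) := by
      rw [← e3, FreeGroup.mk_toWord]
    have hvk : FreeGroup.mk ((P₁ ++ Q₁).drop j) = v ^ k := by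
      rw [hd, ← pow_flatten hvred, FreeGroup.mk_toWord]
    rw [hvk, hPQ] at hsplit
    have h2 : h * v ^ (2 * k) * (v ^ k)⁻¹ = h * v ^ k := by
      rw [(by omega : 2 * k = k + k), pow_add]
      group
    rw [← h2, hsplit]
    group
  -- apply prefix_close
  have hn₀ : h * v ^ (2 * k) * h⁻¹ ∈ N := by
    have h2 : h * v ^ (2 * k) * h⁻¹ = g * u ^ (2 * k) * g⁻¹ := by
      rw [hcv, hh, conj_pow]
      group
    rw [h2]
    exact hNn.conj_mem _ (Subgroup.pow_mem N huN _) g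
  obtain ⟨m, hm, hmle⟩ := prefix_close hS (h * v ^ (2 * k) * h⁻¹) (hN ▸ hn₀) p hppre
  rw [hN] at hm
  refine ⟨m⁻¹ * (g * u ^ k * g⁻¹), Subgroup.mul_mem _ (Subgroup.inv_mem _ hm)
    (hNn.conj_mem _ (Subgroup.pow_mem N huN _) g), ?_⟩
  have hrw : m⁻¹ * (g * u ^ k * g⁻¹) * g = (m⁻¹ * FreeGroup.mk p) * c⁻¹ := by
    rw [hmkp, hh, hcv, conj_pow]
    group
  rw [hrw]
  calc norm (m⁻¹ * FreeGroup.mk p * c⁻¹) ≤ norm (m⁻¹ * FreeGroup.mk p) + norm c⁻¹ :=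
        FreeGroup.norm_mul_le _ _
  _ ≤ R + norm c := by rw [FreeGroup.norm_inv_eq]; omega
  _ ≤ R + norm u := by omega


/-- Main theorem for finite alphabet. -/
theorem finiteIndex_aux [Finite α] (N : Subgroup (FreeGroup α)) [hNn : N.Normal]
    (hne : N ≠ ⊥) (hfg : N.FG) : N.FiniteIndex := by
  obtain ⟨S, hScl, hSfin⟩ := (Subgroup.fg_iff N).mp hfg
  obtain ⟨u, huN, hu⟩ := (N.bot_or_exists_ne_one).resolve_left hne
  obtain ⟨R, hR⟩ : ∃ R : ℕ, ∀ x ∈ S, norm x ≤ R := by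
    have := hSfin.to_subtype
    rcases isEmpty_or_nonempty S with hS | hS
    · exact ⟨0, fun x hx => (hS.false ⟨x, hx⟩).elim⟩
    · obtain ⟨R, hR⟩ := Finite.exists_le (fun x : S => norm (x : FreeGroup α))
      exact ⟨R, fun x hx => hR ⟨x, hx⟩⟩
  set C := R + norm u with hC
  -- every left coset has a representative of norm ≤ C
  have key : ∀ q : FreeGroup α ⧸ N, ∃ x : FreeGroup α,
      QuotientGroup.mk x = q ∧ norm x ≤ C := by
    intro q
    obtain ⟨g, hgq⟩ : ∃ g, (QuotientGroup.mk g : FreeGroup α ⧸ N) = q :=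
      ⟨Quotient.out q, QuotientGroup.out_eq' q⟩
    obtain ⟨n, hn, hnle⟩ := coset_bound N S hScl hR u huN hu g⁻¹
    refine ⟨(n * g⁻¹)⁻¹, ?_, by rw [FreeGroup.norm_inv_eq]; exact hnle⟩
    rw [← hgq]
    apply (QuotientGroup.eq (a := (n * g⁻¹)⁻¹) (b := g)).mpr
    have hsimp : ((n * g⁻¹)⁻¹)⁻¹ * g = n := by group
    rw [hsimp]
    exact hn
  have hfin : Finite (FreeGroup α ⧸ N) := by
    have : ∀ q : FreeGroup α ⧸ N, ∃ L : {L : List (α × Bool) // L.length ≤ C},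
        QuotientGroup.mk (FreeGroup.mk L.1) = q := by
      intro q
      obtain ⟨x, hx, hxle⟩ := key q
      refine ⟨⟨x.toWord, ?_⟩, by rw [FreeGroup.mk_toWord]; exact hx⟩
      rw [← norm_eq_length]; exact hxle
    choose f hf using this
    have hfinj : Function.Injective f := by
      intro q₁ q₂ hq
      rw [← hf q₁, ← hf q₂, hq]
    have : Finite {L : List (α × Bool) // L.length ≤ C} := by
      have := List.finite_length_le (α := α × Bool) (n := C)
      exact this.to_subtype
    exact Finite.of_injective f hfinj
  exact N.finiteIndex_of_finite_quotient

/-- letter-killing retraction fixes words over T -/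
theorem pi_fix {T : Finset α} (x : FreeGroup α) (hx : ∀ p ∈ x.toWord, p.1 ∈ T) :
    FreeGroup.lift (fun a => if a ∈ T then FreeGroup.of a else 1) x = x := by
  set π := FreeGroup.lift (fun a => if a ∈ T then FreeGroup.of a else 1) with hπ
  have main : ∀ L : List (α × Bool), (∀ p ∈ L, p.1 ∈ T) →
      π (FreeGroup.mk L) = FreeGroup.mk L := by
    intro L
    induction L with
    | nil => intro _; rw [← FreeGroup.one_eq_mk]; exact _root_.map_one π
    | cons p L ihL =>
      intro hmem
      have h1 : FreeGroup.mk (p :: L) = FreeGroup.mk [p] * FreeGroup.mk L := by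
        rw [FreeGroup.mul_mk]; rfl
      have hp1 : p.1 ∈ T := hmem p (by simp)
      have hsingle : π (FreeGroup.mk [p]) = FreeGroup.mk [p] := by
        rcases p with ⟨a, b⟩
        cases b
        · have : FreeGroup.mk [(a, false)] = (FreeGroup.of a)⁻¹ := by
            rw [FreeGroup.of, FreeGroup.inv_mk]
            rfl
          rw [this, _root_.map_inv, hπ, FreeGroup.lift_apply_of, if_pos hp1]
        · have : FreeGroup.mk [(a, true)] = FreeGroup.of a := rfl
          rw [this, hπ, FreeGroup.lift_apply_of, if_pos hp1]
      rw [h1, _root_.map_mul, hsingle, ihL (fun q hq => hmem q (by simp [hq]))]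
  have := main x.toWord hx
  rwa [FreeGroup.mk_toWord] at this

/-- a generator not occurring in `u` cannot commute with `u ≠ 1` -/
theorem not_commute_of_not_mem (u : FreeGroup α) (hu : u ≠ 1) (t : α)
    (ht : ∀ p ∈ u.toWord, p.1 ≠ t) : FreeGroup.of t * u ≠ u * FreeGroup.of t := by
  intro heq
  set W := u.toWord with hW
  have hWne : W ≠ [] := fun h => hu (FreeGroup.toWord_eq_nil_iff.mp h)
  have hWred : IsRed W := isRed_toWord u
  have hred1 : IsRed ((t, true) :: W) := by
    cases hWc : W with
    | nil => exact List.isChain_singleton _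
    | cons hd tl =>
      rw [hWc] at hWred
      refine List.isChain_cons_cons.mpr ⟨?_, hWred⟩
      intro ⟨h1, _⟩
      exact ht hd (by rw [hWc]; simp) h1.symm
  have hred2 : IsRed (W ++ [(t, true)]) := by
    rw [isRed_append]
    refine ⟨hWred, List.isChain_singleton _, ?_⟩
    intro x hx y hy
    have hyt : y = (t, true) := by symm; simpa using hy
    have hxW : x ∈ W := List.mem_of_mem_getLast? hx
    intro ⟨h1, _⟩
    exact ht x hxW (by rw [hyt] at h1; exact h1)
  have ht1 : (FreeGroup.of t * u).toWord = (t, true) :: W := by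
    have : FreeGroup.of t * u = FreeGroup.mk ((t, true) :: W) := by
      conv_lhs => rw [← FreeGroup.mk_toWord (x := u)]
      rw [FreeGroup.of, FreeGroup.mul_mk, ← hW]
      rfl
    rw [this, FreeGroup.toWord_mk, reduce_eq_of_isRed hred1]
  have ht2 : (u * FreeGroup.of t).toWord = W ++ [(t, true)] := by
    have : u * FreeGroup.of t = FreeGroup.mk (W ++ [(t, true)]) := by
      conv_lhs => rw [← FreeGroup.mk_toWord (x := u)]
      rw [FreeGroup.of, FreeGroup.mul_mk, ← hW]
    rw [this, FreeGroup.toWord_mk, reduce_eq_of_isRed hred2]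
  rw [heq, ht2] at ht1
  -- (t,true) :: W = W ++ [(t,true)] is impossible since head of W is not a t-letter
  cases hWc : W with
  | nil => exact hWne hWc
  | cons hd tl =>
    rw [hWc] at ht1
    have hhd : hd = (t, true) := by
      have h2 := congrArg List.head? ht1
      symm
      simpa using h2.symm
    exact ht hd (by rw [hWc]; simp) (by rw [hhd])


/-- The full first conjunct: arbitrary alphabet. -/
theorem main_all (α : Type) (N : Subgroup (FreeGroup α)) [hNn : N.Normal]
    (hne : N ≠ ⊥) (hfg : N.FG) : N.FiniteIndex := by
  classical
  obtain ⟨S, hScl, hSfin⟩ := (Subgroup.fg_iff N).mp hfg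
  obtain ⟨u, huN, hu⟩ := (N.bot_or_exists_ne_one).resolve_left hne
  set T : Finset α :=
    (hSfin.toFinset.biUnion fun x => (x.toWord.map Prod.fst).toFinset)
      ∪ (u.toWord.map Prod.fst).toFinset with hT
  set π : FreeGroup α →* FreeGroup α :=
    FreeGroup.lift (fun a => if a ∈ T then FreeGroup.of a else 1) with hπ
  have hNfix : ∀ n ∈ N, π n = n := by
    have hle : N ≤ MonoidHom.eqLocus π (MonoidHom.id _) := by
      rw [← hScl]
      apply (Subgroup.closure_le _).mpr
      intro x hx
      have : π x = x := by
        apply pi_fix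
        intro p hp
        rw [hT]
        apply Finset.mem_union_left
        apply Finset.mem_biUnion.mpr
        exact ⟨x, hSfin.mem_toFinset.mpr hx, List.mem_toFinset.mpr
          (List.mem_map.mpr ⟨p, hp, rfl⟩)⟩
      exact this
    intro n hn
    exact hle hn
  have hTall : ∀ t : α, t ∈ T := by
    intro t
    by_contra ht
    have hπt : π (FreeGroup.of t) = 1 := by
      rw [hπ, FreeGroup.lift_apply_of, if_neg ht]
    have hy : (FreeGroup.of t)⁻¹ * u * FreeGroup.of t ∈ N := by
      have := hNn.conj_mem u huN (FreeGroup.of t)⁻¹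
      simpa using this
    have hπy := hNfix _ hy
    rw [_root_.map_mul, _root_.map_mul, _root_.map_inv, hπt, hNfix u huN] at hπy
    simp only [inv_one, one_mul, mul_one] at hπy
    -- hπy : u = (of t)⁻¹ * u * of t
    have hcomm : FreeGroup.of t * u = u * FreeGroup.of t := by
      conv_lhs => rw [hπy]
      group
    refine not_commute_of_not_mem u hu t ?_ hcomm
    intro p hp
    intro hpt
    apply ht
    rw [hT]
    apply Finset.mem_union_right
    exact List.mem_toFinset.mpr (List.mem_map.mpr ⟨p, hp, hpt⟩)
  have : Finite α := by
    refine Finite.of_injective (fun a : α => (⟨a, hTall a⟩ : {x // x ∈ T})) ?_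
    intro a b h
    exact congrArg Subtype.val h
  exact finiteIndex_aux N hne hfg

end StmtAux

theorem stmt_13 :
    (∀ (α : Type) [Nontrivial (FreeGroup α)] (N : Subgroup (FreeGroup α)) [N.Normal],
        N ≠ ⊥ → N.FG → N.FiniteIndex) ∧
    (∀ (α : Type) (a b : α), a ≠ b →
      ∀ χ : FreeGroup α →* Multiplicative ℤ, Function.Surjective χ → ¬ χ.ker.FG) := by
  constructor
  · intro α _ N _ hne hfg
    exact StmtAux.main_all α N hne hfg
  · intro α a b hab χ hsur hFG
    classical
    set z : FreeGroup α := @Bracket.bracket _ _ commutatorElement (FreeGroup.of a) (FreeGroup.of b) with hz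
    have hzker : z ∈ χ.ker := by
      rw [MonoidHom.mem_ker, hz, map_commutatorElement,
        commutatorElement_eq_one_iff_mul_comm]
      exact mul_comm _ _
    have hzne : z ≠ 1 := by
      have hzmk : z = FreeGroup.mk [(a, true), (b, true), (a, false), (b, false)] := by
        rw [hz, commutatorElement_def]
        have h1 : FreeGroup.of a = FreeGroup.mk [(a, true)] := rfl
        have h2 : FreeGroup.of b = FreeGroup.mk [(b, true)] := rfl
        have h3 : (FreeGroup.of a)⁻¹ = FreeGroup.mk [(a, false)] := by
          rw [h1, FreeGroup.inv_mk]; rfl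
        have h4 : (FreeGroup.of b)⁻¹ = FreeGroup.mk [(b, false)] := by
          rw [h2, FreeGroup.inv_mk]; rfl
        rw [h1, h2, FreeGroup.inv_mk, FreeGroup.inv_mk]
        rw [FreeGroup.mul_mk, FreeGroup.mul_mk, FreeGroup.mul_mk]
        rfl
      have hzred : StmtAux.IsRed [(a, true), (b, true), (a, false), (b, false)] := by
        refine List.isChain_cons_cons.mpr ⟨?_, List.isChain_cons_cons.mpr ⟨?_, List.isChain_cons_cons.mpr
          ⟨?_, List.isChain_singleton _⟩⟩⟩ <;> simp [hab, Ne.symm hab]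
      intro h1
      have : z.toWord = [(a, true), (b, true), (a, false), (b, false)] := by
        rw [hzmk, FreeGroup.toWord_mk, StmtAux.reduce_eq_of_isRed hzred]
      rw [h1, FreeGroup.toWord_one] at this
      simp at this
    have hkerne : χ.ker ≠ ⊥ := by
      intro h
      rw [h, Subgroup.mem_bot] at hzker
      exact hzne hzker
    have hfi : χ.ker.FiniteIndex := StmtAux.main_all α χ.ker hkerne hFG
    have hcard : χ.ker.index = 0 := by
      rw [Subgroup.index_eq_card]
      have e := QuotientGroup.quotientKerEquivOfSurjective χ hsur
      rw [Nat.card_congr e.toEquiv]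
      exact Nat.card_eq_zero_of_infinite
    exact hfi.index_ne_zero hcard
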